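/- arXiv:1301.5312 — 3 statements merged into one kernel-verified Lean document; each statement's English description precedes it below -/
import Mathlib

section
/- Let $(X, \mu)$ be a finite measure space, and let $(f_j)$ be a sequence of measurable real-valued functions on $X$ that are uniformly bounded above by a constant $M$. Suppose that for every bounded measurable function $\varphi$ on $X$ the sequence $\int_X f_j \varphi \, d\mu$ converges as $j \to \infty$. Then for any measurable set $U \subseteq X$ with $\mu(U) > 0$ and any measurable function $h$ on $U$ with $h \ge c > 0$ and $h$ bounded above, it is not the case that $\int_U e^{f_j} h \, d\mu \to 0$ as $j \to \infty$. -/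
open MeasureTheory Filter
open scoped ENNReal

/-- Let `(X, μ)` be a finite measure space and `(f_j)` a sequence of measurable functions
uniformly bounded above by `M`, such that `∫ f_j φ dμ` converges as `j → ∞` for every bounded
measurable `φ` (i.e. `f_j` converges as a current).  Then for any measurable `U` with
`μ(U) > 0` and any measurable `h` on `U` with `h ≥ c > 0` and `h` bounded above, the
integrals `∫_U e^{f_j} h dμ` do not tend to `0`. -/
theorem not_tendsto_zero_of_converges_as_current
    {X : Type*} [MeasurableSpace X] (μ : Measure X) [IsFiniteMeasure μ]
    (f : ℕ → X → ℝ) (M : ℝ)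
    (hmeas : ∀ j, Measurable (f j))
    (hbdd : ∀ j x, f j x ≤ M)
    (hconv : ∀ φ : X → ℝ, Measurable φ → (∃ B, ∀ x, |φ x| ≤ B) →
      ∃ l : ℝ, Tendsto (fun j => ∫ x, f j x * φ x ∂μ) atTop (nhds l))
    (U : Set X) (hU : MeasurableSet U) (hUpos : 0 < μ U)
    (h : X → ℝ) (hmeas_h : Measurable h)
    (c : ℝ) (hc : 0 < c) (hlow : ∀ x ∈ U, c ≤ h x)
    (hhigh : ∃ B, ∀ x ∈ U, h x ≤ B) :
    ¬ Tendsto (fun j => ∫ x in U, Real.exp (f j x) * h x ∂μ) atTop (nhds 0) := by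
  intro htend
  obtain ⟨B, hB⟩ := hhigh
  have hUfin : μ U ≠ ⊤ := measure_ne_top μ U
  -- Step 1: choose truncation levels n j
  have hchoice : ∀ j : ℕ, ∃ n : ℕ, μ (U ∩ {x | f j x < -(n : ℝ)}) < μ U / 2 ^ (j + 2) := by
    intro j
    set s : ℕ → Set X := fun n => U ∩ {x | f j x < -(n : ℝ)} with hs
    have hmeasS : ∀ n, NullMeasurableSet (s n) μ := fun n =>
      (hU.inter (measurableSet_lt (hmeas j) measurable_const)).nullMeasurableSet
    have hanti : Antitone s := by
      intro m n hmn x hx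
      simp only [hs, Set.mem_inter_iff, Set.mem_setOf_eq] at hx ⊢
      exact ⟨hx.1, lt_of_lt_of_le hx.2 (neg_le_neg (Nat.cast_le.mpr hmn))⟩
    have hiInter : ⋂ n, s n = ∅ := by
      ext x
      simp only [Set.mem_iInter, Set.mem_empty_iff_false, iff_false]
      intro hx
      obtain ⟨n, hn⟩ := exists_nat_gt (-(f j x))
      have h2 : f j x < -(n : ℝ) := (hx n).2
      linarith
    have htends := tendsto_measure_iInter_atTop hmeasS hanti ⟨0, measure_ne_top μ _⟩
    rw [hiInter, measure_empty] at htends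
    have hpos : (0 : ℝ≥0∞) < μ U / 2 ^ (j + 2) :=
      ENNReal.div_pos hUpos.ne' (ENNReal.pow_ne_top ENNReal.ofNat_ne_top)
    exact (htends.eventually_lt_const hpos).exists
  choose n hn using hchoice
  -- Step 2: the good set S
  set S : Set X := U ∩ ⋂ j, {x | -(n j : ℝ) ≤ f j x} with hSdef
  have hSmeas : MeasurableSet S :=
    hU.inter (MeasurableSet.iInter fun j => measurableSet_le measurable_const (hmeas j))
  have hSU : S ⊆ U := Set.inter_subset_left
  have hdiff : U \ S ⊆ ⋃ j, (U ∩ {x | f j x < -(n j : ℝ)}) := by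
    intro x hx
    simp only [hSdef, Set.mem_diff, Set.mem_inter_iff, Set.mem_iInter, Set.mem_setOf_eq,
      not_and, not_forall, not_le] at hx
    obtain ⟨j, hj⟩ := hx.2 hx.1
    exact Set.mem_iUnion.2 ⟨j, hx.1, hj⟩
  have hsum : (∑' j : ℕ, μ U / 2 ^ (j + 2)) = μ U / 2 := by
    have h1 : ∀ j : ℕ, μ U / 2 ^ (j + 2) = (μ U / 4) * (2 : ℝ≥0∞)⁻¹ ^ j := by
      intro j
      rw [pow_add, div_eq_mul_inv,
        ENNReal.mul_inv (Or.inr (by norm_num)) (Or.inl (ENNReal.pow_ne_top ENNReal.ofNat_ne_top)),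
        ENNReal.inv_pow, show ((2 : ℝ≥0∞) ^ 2) = 4 by norm_num, div_eq_mul_inv]
      ring
    rw [tsum_congr h1, ENNReal.tsum_mul_left, ENNReal.tsum_geometric,
      ENNReal.one_sub_inv_two, inv_inv, div_eq_mul_inv, div_eq_mul_inv, mul_assoc]
    congr 1
    rw [show (4 : ℝ≥0∞) = 2 * 2 by norm_num,
      ENNReal.mul_inv (Or.inl two_ne_zero) (Or.inl ENNReal.ofNat_ne_top),
      mul_assoc, ENNReal.inv_mul_cancel two_ne_zero ENNReal.ofNat_ne_top, mul_one]
  have hUS : μ (U \ S) ≤ μ U / 2 := by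
    calc μ (U \ S) ≤ μ (⋃ j, (U ∩ {x | f j x < -(n j : ℝ)})) := measure_mono hdiff
    _ ≤ ∑' j : ℕ, μ (U ∩ {x | f j x < -(n j : ℝ)}) := measure_iUnion_le _
    _ ≤ ∑' j : ℕ, μ U / 2 ^ (j + 2) := ENNReal.tsum_le_tsum fun j => (hn j).le
    _ = μ U / 2 := hsum
  have hSpos : 0 < μ S := by
    by_contra hcon
    push_neg at hcon
    have hS0 : μ S = 0 := le_antisymm hcon zero_le
    have : μ U ≤ μ S + μ (U \ S) := by
      calc μ U = μ (S ∪ (U \ S)) := by rw [Set.union_diff_cancel hSU]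
      _ ≤ μ S + μ (U \ S) := measure_union_le _ _
    rw [hS0, zero_add] at this
    have : μ U ≤ μ U / 2 := this.trans hUS
    have h2 : μ U / 2 < μ U := ENNReal.half_lt_self hUpos.ne' hUfin
    exact absurd (this.trans_lt h2) (lt_irrefl _)
  set s : ℝ := (μ S).toReal with hsdef
  have hsfin : μ S ≠ ⊤ := measure_ne_top μ S
  have hspos : 0 < s := ENNReal.toReal_pos hSpos.ne' hsfin
  -- Step 3: integrability of f j on S
  have hIntfS : ∀ j, IntegrableOn (f j) S μ := by
    intro j
    refine Integrable.mono' (integrable_const (max M (n j))) ((hmeas j).aestronglyMeasurable) ?_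
    filter_upwards [ae_restrict_mem hSmeas] with x hx
    rw [Real.norm_eq_abs, abs_le]
    constructor
    · have := hx.2
      simp only [Set.mem_iInter, Set.mem_setOf_eq] at this
      have := this j
      have : -(n j : ℝ) ≤ f j x := this
      have hle : -(max M (n j)) ≤ -(n j : ℝ) := by
        simp only [neg_le_neg_iff]
        exact le_max_right _ _
      linarith
    · exact (hbdd j x).trans (le_max_left _ _)
  -- test function: indicator of S
  have hφ := hconv (S.indicator fun _ => (1 : ℝ))
    (measurable_const.indicator hSmeas)
    ⟨1, fun x => by
      by_cases hx : x ∈ S <;> simp [hx]⟩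
  obtain ⟨l, hl⟩ := hφ
  have hlS : Tendsto (fun j => ∫ x in S, f j x ∂μ) atTop (nhds l) := by
    have : ∀ j, (∫ x, f j x * S.indicator (fun _ => (1:ℝ)) x ∂μ) = ∫ x in S, f j x ∂μ := by
      intro j
      rw [← integral_indicator hSmeas]
      congr 1
      funext x
      by_cases hx : x ∈ S <;> simp [hx]
    simpa only [this] using hl
  -- Step 4: Markov / smallness of A j
  set K : ℝ := (2 * |l| + 4) / s with hKdef
  have hKs : K * s = 2 * |l| + 4 := div_mul_cancel₀ _ hspos.ne'
  set A : ℕ → Set X := fun j => S ∩ {x | -K ≤ f j x} with hAdef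
  have hAmeas : ∀ j, MeasurableSet (A j) :=
    fun j => hSmeas.inter (measurableSet_le measurable_const (hmeas j))
  have hAS : ∀ j, A j ⊆ S := fun j => Set.inter_subset_left
  have hInte : ∀ j, IntegrableOn (fun x => Real.exp (f j x) * h x) U μ := by
    intro j
    refine Integrable.mono' (integrable_const (Real.exp M * max B 0))
      (((hmeas j).exp.mul hmeas_h).aestronglyMeasurable) ?_
    filter_upwards [ae_restrict_mem hU] with x hx
    rw [Real.norm_eq_abs, abs_mul, abs_of_pos (Real.exp_pos _),
      abs_of_pos (lt_of_lt_of_le hc (hlow x hx))]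
    have h1 : Real.exp (f j x) ≤ Real.exp M := Real.exp_le_exp.2 (hbdd j x)
    have h2 : h x ≤ max B 0 := (hB x hx).trans (le_max_left _ _)
    have h3 : 0 ≤ h x := le_of_lt (lt_of_lt_of_le hc (hlow x hx))
    exact mul_le_mul h1 h2 h3 (Real.exp_pos M).le
  have hMarkov : ∀ j, Real.exp (-K) * c * (μ (A j)).toReal ≤
      ∫ x in U, Real.exp (f j x) * h x ∂μ := by
    intro j
    have h1 : ∫ x in A j, (Real.exp (-K) * c) ∂μ ≤ ∫ x in A j, Real.exp (f j x) * h x ∂μ := by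
      refine setIntegral_mono_on (integrable_const _)
        ((hInte j).mono_set ((hAS j).trans hSU)) (hAmeas j) ?_
      intro x hx
      have hxU : x ∈ U := hSU (hAS j hx)
      have := hx.2
      exact mul_le_mul (Real.exp_le_exp.2 this) (hlow x hxU) hc.le (Real.exp_pos _).le
    rw [setIntegral_const, smul_eq_mul, mul_comm] at h1
    refine le_trans (le_of_eq (by rfl)) (h1.trans ?_)
    refine setIntegral_mono_set (hInte j) ?_ (HasSubset.Subset.eventuallyLE ((hAS j).trans hSU))
    filter_upwards [ae_restrict_mem hU] with x hx
    exact mul_nonneg (Real.exp_pos _).le (hc.le.trans (hlow x hx))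
  have haj : Tendsto (fun j => (μ (A j)).toReal) atTop (nhds 0) := by
    have hnn : ∀ j, 0 ≤ (μ (A j)).toReal := fun j => ENNReal.toReal_nonneg
    have hub : ∀ j, (μ (A j)).toReal ≤ (Real.exp K / c) * ∫ x in U, Real.exp (f j x) * h x ∂μ := by
      intro j
      have hM := hMarkov j
      have hpos : 0 < Real.exp (-K) * c := mul_pos (Real.exp_pos _) hc
      have h1 : (μ (A j)).toReal ≤ (∫ x in U, Real.exp (f j x) * h x ∂μ) / (Real.exp (-K) * c) :=
        (le_div_iff₀ hpos).2 (by linarith [hM])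
      refine h1.trans (le_of_eq ?_)
      rw [Real.exp_neg]
      field_simp
    exact squeeze_zero hnn hub (by simpa using htend.const_mul (Real.exp K / c))
  -- Step 5: splitting the integral over S
  have hsplit : ∀ j, ∫ x in S, f j x ∂μ ≤ (M + K) * (μ (A j)).toReal - K * s := by
    intro j
    have hIA : IntegrableOn (f j) (A j) μ := (hIntfS j).mono_set (hAS j)
    have hID : IntegrableOn (f j) (S \ A j) μ := (hIntfS j).mono_set Set.diff_subset
    have hunion : ∫ x in S, f j x ∂μ = (∫ x in A j, f j x ∂μ) + ∫ x in S \ A j, f j x ∂μ := by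
      rw [← setIntegral_union disjoint_sdiff_self_right (hSmeas.diff (hAmeas j)) hIA hID,
        Set.union_diff_cancel (hAS j)]
    have hμdiff : (μ (S \ A j)).toReal = s - (μ (A j)).toReal := by
      rw [measure_diff (hAS j) (hAmeas j).nullMeasurableSet (measure_ne_top μ _),
        ENNReal.toReal_sub_of_le (measure_mono (hAS j)) hsfin]
    have hb1 : ∫ x in A j, f j x ∂μ ≤ M * (μ (A j)).toReal := by
      have := setIntegral_mono_on hIA (integrable_const M) (hAmeas j)
        (fun x _ => hbdd j x)
      rwa [setIntegral_const, smul_eq_mul, mul_comm] at this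
    have hb2 : ∫ x in S \ A j, f j x ∂μ ≤ -K * (s - (μ (A j)).toReal) := by
      have hpt : ∀ x ∈ S \ A j, f j x ≤ -K := by
        intro x hx
        have : ¬(-K ≤ f j x) := fun hcon => hx.2 ⟨hx.1, hcon⟩
        linarith [not_le.1 this]
      have := setIntegral_mono_on hID (integrable_const (-K))
        (hSmeas.diff (hAmeas j)) hpt
      rwa [setIntegral_const, smul_eq_mul, mul_comm, Measure.real, hμdiff] at this
    rw [hunion]
    have := add_le_add hb1 hb2
    refine this.trans (le_of_eq (by ring))
  -- Step 6: derive the contradiction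
  have hev1 : ∀ᶠ j in atTop, (M + K) * (μ (A j)).toReal < 1 := by
    have : Tendsto (fun j => (M + K) * (μ (A j)).toReal) atTop (nhds 0) := by
      simpa using haj.const_mul (M + K)
    exact this.eventually_lt_const one_pos
  have hev2 : ∀ᶠ j in atTop, l - 1 < ∫ x in S, f j x ∂μ :=
    hlS.eventually_const_lt (by linarith)
  obtain ⟨j, h1, h2⟩ := (hev1.and hev2).exists
  have h3 := hsplit j
  have habs1 : l ≤ |l| := le_abs_self l
  have habs2 : -|l| ≤ l := neg_abs_le l
  linarith [hKs]
end

section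
/- Fix $\delta > 0$ and define $\tilde g_\delta'(x) = 1$ for $x \in (0, \delta]$, $\tilde g_\delta'(x) = \cos^2\big(\tfrac{\pi}{2\delta}(x - \delta)\big)$ for $x \in (\delta, 2\delta)$, and $\tilde g_\delta'(x) = 0$ for $x \ge 2\delta$, and set $\tilde g_\delta(x) = \int_0^x \tilde g_\delta'(t)\, dt$. Then $\tilde g_\delta$ is twice continuously differentiable on $(0,\infty)$, satisfies $\tilde g_\delta(x) = x$ for $x \in (0, \delta)$, and satisfies the differential inequality $\big(\tfrac{\tilde g_\delta'(x)}{\tilde g_\delta(x)}\big)^2 - \tfrac{\tilde g_\delta''(x)}{\tilde g_\delta(x)} - \tfrac{\tilde g_\delta'(x)}{x \tilde g_\delta(x)} \ge 0$ for all $x > 0$, with equality for $x \in (0,\delta) \cup (2\delta, \infty)$. -/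
open Set

/-- The piecewise derivative `g̃_δ'` : equal to `1` on `(0, δ]`, to
`cos²(π/(2δ)(x-δ))` on `(δ, 2δ)`, and to `0` for `x ≥ 2δ`. -/
noncomputable def gAux (δ x : ℝ) : ℝ :=
  if x ≤ δ then 1
  else if x < 2 * δ then Real.cos (Real.pi / (2 * δ) * (x - δ)) ^ 2
  else 0

/-- The function `g̃_δ(x) = ∫₀ˣ g̃_δ'(t) dt`. -/
noncomputable def gDelta (δ x : ℝ) : ℝ := ∫ t in (0:ℝ)..x, gAux δ t

/-- The second derivative. -/
noncomputable def hAux (δ x : ℝ) : ℝ :=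
  -(Real.pi / (2 * δ)) * Real.sin (Real.pi / δ * (max δ (min x (2 * δ)) - δ))

/-- The smooth middle piece. -/
noncomputable def cAux (δ x : ℝ) : ℝ := Real.cos (Real.pi / (2 * δ) * (x - δ)) ^ 2

lemma hAux_continuous (δ : ℝ) : Continuous (hAux δ) := by
  unfold hAux; fun_prop

lemma hAux_of_le (δ : ℝ) (hδ : 0 < δ) {x : ℝ} (hx : x ≤ δ) : hAux δ x = 0 := by
  have h1 : min x (2 * δ) = x := min_eq_left (by linarith)
  simp [hAux, h1, max_eq_left hx]

lemma hAux_of_ge (δ : ℝ) (hδ : 0 < δ) {x : ℝ} (hx : 2 * δ ≤ x) : hAux δ x = 0 := by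
  have h1 : min x (2 * δ) = 2 * δ := min_eq_right hx
  have h2 : max δ (2 * δ) = 2 * δ := max_eq_right (by linarith)
  have h3 : Real.pi / δ * (2 * δ - δ) = Real.pi := by
    rw [show 2 * δ - δ = δ by ring]; exact div_mul_cancel₀ _ (ne_of_gt hδ)
  unfold hAux; rw [h1, h2, h3, Real.sin_pi, mul_zero]

lemma hAux_of_mem (δ : ℝ) (hδ : 0 < δ) {x : ℝ} (h1 : δ ≤ x) (h2 : x ≤ 2 * δ) :
    hAux δ x = -(Real.pi / (2 * δ)) * Real.sin (Real.pi / δ * (x - δ)) := by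
  simp [hAux, min_eq_left h2, max_eq_right h1]

lemma cAux_hasDerivAt (δ : ℝ) (hδ : 0 < δ) (x : ℝ) :
    HasDerivAt (cAux δ) (-(Real.pi / (2 * δ)) * Real.sin (Real.pi / δ * (x - δ))) x := by
  have hl : HasDerivAt (fun y : ℝ => Real.pi / (2 * δ) * (y - δ)) (Real.pi / (2 * δ)) x := by
    simpa using ((hasDerivAt_id x).sub_const δ).const_mul (Real.pi / (2 * δ))
  have := (hl.cos).pow 2
  convert this using 1
  iterate 3 rfl
  have h2 : Real.pi / δ * (x - δ) = 2 * (Real.pi / (2 * δ) * (x - δ)) := by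
    field_simp
  rw [h2, Real.sin_two_mul]
  ring

lemma gAux_of_le (δ : ℝ) {x : ℝ} (hx : x ≤ δ) : gAux δ x = 1 := by simp [gAux, hx]

lemma gAux_of_ge (δ : ℝ) (hδ : 0 < δ) {x : ℝ} (hx : 2 * δ ≤ x) : gAux δ x = 0 := by
  have h1 : ¬ x ≤ δ := by linarith
  have h2 : ¬ x < 2 * δ := by linarith
  simp [gAux, h1, h2]

lemma gAux_eq_cAux (δ : ℝ) (hδ : 0 < δ) {x : ℝ} (h1 : δ ≤ x) (h2 : x ≤ 2 * δ) :
    gAux δ x = cAux δ x := by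
  rcases eq_or_lt_of_le h1 with rfl | h1'
  · simp [gAux, cAux]
  rcases eq_or_lt_of_le h2 with rfl | h2'
  · have h3 : Real.pi / (2 * δ) * (2 * δ - δ) = Real.pi / 2 := by field_simp; ring
    rw [gAux_of_ge δ hδ le_rfl]
    simp [cAux, h3, Real.cos_pi_div_two]
  · simp [gAux, cAux, not_le.2 h1', h2']

lemma gAux_hasDerivAt (δ : ℝ) (hδ : 0 < δ) (x : ℝ) :
    HasDerivAt (gAux δ) (hAux δ x) x := by
  rcases lt_trichotomy x δ with hx | hx | hx
  · rw [hAux_of_le δ hδ hx.le]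
    refine (hasDerivAt_const x (1:ℝ)).congr_of_eventuallyEq ?_
    filter_upwards [Iio_mem_nhds hx] with y hy using gAux_of_le δ (le_of_lt hy)
  · -- x = δ
    rw [hx, hAux_of_le δ hδ le_rfl]
    have hleft : HasDerivWithinAt (gAux δ) 0 (Iic δ) δ := by
      refine (hasDerivWithinAt_const δ _ (1:ℝ)).congr (fun y hy => gAux_of_le δ hy)
        (gAux_of_le δ le_rfl)
    have hc : HasDerivWithinAt (cAux δ) 0 (Icc δ (2 * δ)) δ := by
      have := (cAux_hasDerivAt δ hδ δ).hasDerivWithinAt (s := Icc δ (2 * δ))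
      rwa [sub_self, mul_zero, Real.sin_zero, mul_zero] at this
    have hright : HasDerivWithinAt (gAux δ) 0 (Ici δ) δ := by
      refine (hc.congr (fun y hy => gAux_eq_cAux δ hδ hy.1 hy.2)
        (gAux_eq_cAux δ hδ le_rfl (by linarith))).mono_of_mem_nhdsWithin ?_
      refine Filter.mem_of_superset (Filter.inter_mem self_mem_nhdsWithin
        (mem_nhdsWithin_of_mem_nhds (Iio_mem_nhds (show δ < 2 * δ by linarith)))) ?_
      rintro y ⟨h1, h2⟩; exact ⟨h1, le_of_lt h2⟩
    have := hleft.union hright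
    rw [Iic_union_Ici] at this
    exact hasDerivWithinAt_univ.mp this
  rcases lt_trichotomy x (2 * δ) with hx2 | hx2 | hx2
  · rw [hAux_of_mem δ hδ hx.le hx2.le]
    refine (cAux_hasDerivAt δ hδ x).congr_of_eventuallyEq ?_
    filter_upwards [Ioo_mem_nhds hx hx2] with y hy using
      gAux_eq_cAux δ hδ hy.1.le hy.2.le
  · -- x = 2δ
    rw [hx2, hAux_of_ge δ hδ le_rfl]
    have hd : -(Real.pi / (2 * δ)) * Real.sin (Real.pi / δ * (2 * δ - δ)) = 0 := by
      have h3 : Real.pi / δ * (2 * δ - δ) = Real.pi := by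
        rw [show 2 * δ - δ = δ by ring]; exact div_mul_cancel₀ _ (ne_of_gt hδ)
      simp [h3, Real.sin_pi]
    have hc : HasDerivWithinAt (cAux δ) 0 (Icc δ (2 * δ)) (2 * δ) := by
      have := (cAux_hasDerivAt δ hδ (2 * δ)).hasDerivWithinAt (s := Icc δ (2 * δ))
      rwa [hd] at this
    have hleft : HasDerivWithinAt (gAux δ) 0 (Iic (2 * δ)) (2 * δ) := by
      refine (hc.congr (fun y hy => gAux_eq_cAux δ hδ hy.1 hy.2)
        (gAux_eq_cAux δ hδ (by linarith) le_rfl)).mono_of_mem_nhdsWithin ?_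
      refine Filter.mem_of_superset (Filter.inter_mem self_mem_nhdsWithin
        (mem_nhdsWithin_of_mem_nhds (Ioi_mem_nhds (show δ < 2 * δ by linarith)))) ?_
      rintro y ⟨h1, h2⟩; exact ⟨le_of_lt h2, h1⟩
    have hright : HasDerivWithinAt (gAux δ) 0 (Ici (2 * δ)) (2 * δ) := by
      refine (hasDerivWithinAt_const (2 * δ) _ (0:ℝ)).congr
        (fun y hy => gAux_of_ge δ hδ hy) (gAux_of_ge δ hδ le_rfl)
    have := hleft.union hright
    rw [Iic_union_Ici] at this
    exact hasDerivWithinAt_univ.mp this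
  · rw [hAux_of_ge δ hδ hx2.le]
    refine (hasDerivAt_const x (0:ℝ)).congr_of_eventuallyEq ?_
    filter_upwards [Ioi_mem_nhds hx2] with y hy using gAux_of_ge δ hδ (le_of_lt hy)

lemma gAux_continuous (δ : ℝ) (hδ : 0 < δ) : Continuous (gAux δ) :=
  continuous_iff_continuousAt.2 fun x => (gAux_hasDerivAt δ hδ x).continuousAt

lemma deriv_gAux (δ : ℝ) (hδ : 0 < δ) : deriv (gAux δ) = hAux δ :=
  funext fun x => (gAux_hasDerivAt δ hδ x).deriv

lemma gDelta_hasDerivAt (δ : ℝ) (hδ : 0 < δ) (x : ℝ) :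
    HasDerivAt (gDelta δ) (gAux δ x) x :=
  ((gAux_continuous δ hδ).integral_hasStrictDerivAt 0 x).hasDerivAt

lemma deriv_gDelta (δ : ℝ) (hδ : 0 < δ) : deriv (gDelta δ) = gAux δ :=
  funext fun x => (gDelta_hasDerivAt δ hδ x).deriv

lemma gAux_nonneg (δ x : ℝ) : 0 ≤ gAux δ x := by
  unfold gAux; split_ifs
  · norm_num
  · positivity
  · exact le_rfl

lemma gAux_le_one (δ x : ℝ) : gAux δ x ≤ 1 := by
  unfold gAux; split_ifs
  · exact le_rfl
  · nlinarith [Real.cos_le_one (Real.pi / (2 * δ) * (x - δ)),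
      Real.neg_one_le_cos (Real.pi / (2 * δ) * (x - δ))]
  · norm_num

lemma gDelta_eq_id (δ : ℝ) (hδ : 0 < δ) {x : ℝ} (hx : x ≤ δ) : gDelta δ x = x := by
  have : ∀ t ∈ uIcc (0:ℝ) x, gAux δ t = 1 := by
    intro t ht
    refine gAux_of_le δ ?_
    rcases le_total (0:ℝ) x with h | h
    · rw [uIcc_of_le h] at ht; exact ht.2.trans hx
    · rw [uIcc_of_ge h] at ht; exact ht.2.trans hδ.le
  rw [gDelta, intervalIntegral.integral_congr this]
  simp

lemma gDelta_bounds (δ : ℝ) (hδ : 0 < δ) {x : ℝ} (h1 : δ ≤ x) (h2 : x ≤ 2 * δ) :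
    δ ≤ gDelta δ x ∧ gDelta δ x ≤ x := by
  have hint : ∀ a b : ℝ, IntervalIntegrable (gAux δ) MeasureTheory.volume a b :=
    fun a b => (gAux_continuous δ hδ).intervalIntegrable a b
  have hsplit : gDelta δ x = gDelta δ δ + ∫ t in δ..x, gAux δ t := by
    rw [gDelta, gDelta, ← intervalIntegral.integral_add_adjacent_intervals (hint 0 δ) (hint δ x)]
  have hgd : gDelta δ δ = δ := gDelta_eq_id δ hδ le_rfl
  have hnn : 0 ≤ ∫ t in δ..x, gAux δ t :=
    intervalIntegral.integral_nonneg h1 (fun u _ => gAux_nonneg δ u)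
  have hub : (∫ t in δ..x, gAux δ t) ≤ x - δ := by
    have := intervalIntegral.integral_mono_on h1 (hint δ x)
      (intervalIntegrable_const (c := (1:ℝ))) (fun u _ => gAux_le_one δ u)
    simpa using this
  constructor <;> [skip; skip] <;> rw [hsplit, hgd] <;> linarith

lemma alg_aux (a C S g x : ℝ) (hg : g ≠ 0) (hx : x ≠ 0) :
    (C ^ 2 / g) ^ 2 - -a * (2 * S * C) / g - C ^ 2 / (x * g) =
      (C ^ 2 * C ^ 2 + a * (2 * S * C) * g - C ^ 2 * g / x) / g ^ 2 := by
  field_simp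
  ring

/-- `g̃_δ` is `C²` on `(0, ∞)`, equals `x` on `(0, δ)`, satisfies the differential
inequality `(g̃_δ'/g̃_δ)² - g̃_δ''/g̃_δ - g̃_δ'/(x g̃_δ) ≥ 0` on `(0, ∞)`, with equality on
`(0, δ) ∪ (2δ, ∞)`. -/
theorem gDelta_properties (δ : ℝ) (hδ : 0 < δ) :
    ContDiffOn ℝ 2 (gDelta δ) (Ioi (0:ℝ)) ∧
    (∀ x ∈ Ioo (0:ℝ) δ, gDelta δ x = x) ∧
    (∀ x : ℝ, 0 < x →
      0 ≤ (deriv (gDelta δ) x / gDelta δ x) ^ 2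
            - deriv (deriv (gDelta δ)) x / gDelta δ x
            - deriv (gDelta δ) x / (x * gDelta δ x)) ∧
    (∀ x : ℝ, x ∈ Ioo (0:ℝ) δ ∪ Ioi (2 * δ) →
      (deriv (gDelta δ) x / gDelta δ x) ^ 2
          - deriv (deriv (gDelta δ)) x / gDelta δ x
          - deriv (gDelta δ) x / (x * gDelta δ x) = 0) := by
  have hd1 : deriv (gDelta δ) = gAux δ := deriv_gDelta δ hδ
  have hd2 : deriv (deriv (gDelta δ)) = hAux δ := by rw [hd1]; exact deriv_gAux δ hδ
  have hcd : ContDiff ℝ 2 (gDelta δ) := by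
    rw [show (2 : WithTop ℕ∞) = 1 + 1 by norm_num, contDiff_succ_iff_deriv]
    refine ⟨fun x => (gDelta_hasDerivAt δ hδ x).differentiableAt, by simp, ?_⟩
    rw [hd1, contDiff_one_iff_deriv]
    exact ⟨fun x => (gAux_hasDerivAt δ hδ x).differentiableAt,
      by rw [deriv_gAux δ hδ]; exact hAux_continuous δ⟩
  have heqz : ∀ x : ℝ, x ∈ Ioo (0:ℝ) δ ∪ Ioi (2 * δ) →
      (deriv (gDelta δ) x / gDelta δ x) ^ 2
          - deriv (deriv (gDelta δ)) x / gDelta δ x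
          - deriv (gDelta δ) x / (x * gDelta δ x) = 0 := by
    rintro x (⟨hx0, hxδ⟩ | hx)
    · rw [hd2, hd1, gDelta_eq_id δ hδ hxδ.le, gAux_of_le δ hxδ.le, hAux_of_le δ hδ hxδ.le]
      have hx0' : x ≠ 0 := ne_of_gt hx0
      field_simp
      ring
    · rw [hd2, hd1, gAux_of_ge δ hδ (le_of_lt hx), hAux_of_ge δ hδ (le_of_lt hx)]
      simp
  refine ⟨hcd.contDiffOn, fun x hx => gDelta_eq_id δ hδ hx.2.le, ?_, heqz⟩
  intro x hx0
  rcases lt_or_ge x δ with hxδ | hxδ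
  · exact le_of_eq (heqz x (Or.inl ⟨hx0, hxδ⟩)).symm
  rcases lt_or_ge (2 * δ) x with hx2 | hx2
  · exact le_of_eq (heqz x (Or.inr hx2)).symm
  -- δ ≤ x ≤ 2δ
  rw [hd2, hd1, gAux_eq_cAux δ hδ hxδ hx2, hAux_of_mem δ hδ hxδ hx2]
  obtain ⟨hg1, hg2⟩ := gDelta_bounds δ hδ hxδ hx2
  set θ := Real.pi / (2 * δ) * (x - δ) with hθ
  have hθ0 : 0 ≤ θ := by
    have : 0 ≤ x - δ := by linarith
    positivity
  have hθ2 : θ ≤ Real.pi / 2 := by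
    rw [hθ]
    rw [div_mul_eq_mul_div, div_le_div_iff₀ (by linarith) two_pos]
    nlinarith [Real.pi_pos]
  set g := gDelta δ x with hg
  set C := Real.cos θ with hC
  set S := Real.sin θ with hS
  have hCpos : 0 ≤ C := Real.cos_nonneg_of_mem_Icc ⟨by linarith [Real.pi_pos], hθ2⟩
  have hSpos : 0 ≤ S := Real.sin_nonneg_of_nonneg_of_le_pi hθ0 (by linarith [Real.pi_pos, hθ2])
  have hgpos : 0 < g := lt_of_lt_of_le hδ hg1
  have h2θ : Real.pi / δ * (x - δ) = 2 * θ := by rw [hθ]; field_simp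
  rw [h2θ, Real.sin_two_mul, cAux]
  rw [← hC]
  have hCS1 : C * S ≤ 1 := by
    nlinarith [Real.sin_sq_add_cos_sq θ, sq_nonneg (S - C)]
  have hkey : 0 ≤ C ^ 2 * C ^ 2 + (Real.pi / (2 * δ)) * (2 * S * C) * g - C ^ 2 * g / x := by
    have hgx : g / x ≤ 1 := (div_le_one (by linarith)).2 hg2
    have h1 : C ^ 2 * g / x ≤ C ^ 2 := by
      rw [mul_div_assoc]
      nlinarith [sq_nonneg C]
    have h2 : C ^ 2 * C ^ 2 - C ^ 2 = -(C ^ 2 * S ^ 2) := by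
      nlinarith [Real.sin_sq_add_cos_sq θ]
    have h3 : Real.pi / (2 * δ) * (2 * S * C) * g - C ^ 2 * S ^ 2 =
        S * C * (Real.pi / δ * g - S * C) := by field_simp
    have h4 : 0 ≤ S * C * (Real.pi / δ * g - S * C) := by
      apply mul_nonneg (mul_nonneg hSpos hCpos)
      have : Real.pi / δ * g ≥ Real.pi := by
        rw [ge_iff_le, div_mul_eq_mul_div, le_div_iff₀ hδ]
        nlinarith [Real.pi_pos]
      nlinarith [Real.pi_gt_three]
    linarith
  have hx0' : x ≠ 0 := ne_of_gt hx0
  have hg0' : g ≠ 0 := ne_of_gt hgpos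
  rw [alg_aux (Real.pi / (2 * δ)) C S g x hg0' hx0']
  positivity
end

section
/- Let $(X, g)$ be a compact Riemannian manifold and let $(f_j)$ be a sequence of smooth functions on $X$ such that: (i) $\sup_X f_j \le M$ for all $j$ with $M$ independent of $j$; (ii) for every smooth test function $\varphi$, $\int_X f_j \varphi \, d\mathrm{vol}_g$ converges as $j \to \infty$. Then for any nonempty open set $U \subseteq X$, it is not the case that $\int_U e^{f_j} \, d\mathrm{vol}_g \to 0$ as $j \to \infty$. -/
open MeasureTheory Filter

/-- **Lemma 3.5 of the paper (case `h ≡ 1`, manifold version).**  Let `(X, g)` be a compact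
Riemannian manifold — abstracted here by a compact space `X` with its (finite, positive on
open sets) Riemannian volume measure `vol` and its class `Smooth` of smooth functions, which
are continuous and include bump functions.  Let `(f_j)` be a sequence of smooth functions
with `sup_X f_j ≤ M` uniformly, such that `∫ f_j φ d vol` converges for every smooth test
function `φ`.  Then for any nonempty open `U ⊆ X`, the integrals `∫_U e^{f_j} d vol` do not
tend to `0`. -/
theorem exp_integral_not_tendsto_zero
    {X : Type*} [TopologicalSpace X] [CompactSpace X] [MeasurableSpace X] [BorelSpace X]
    (vol : Measure X) [IsFiniteMeasure vol] [vol.IsOpenPosMeasure]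
    (Smooth : (X → ℝ) → Prop)
    (hSmoothCont : ∀ g, Smooth g → Continuous g)
    (hShrink : ∀ U : Set X, IsOpen U → U.Nonempty →
      ∃ U₀ : Set X, IsOpen U₀ ∧ U₀.Nonempty ∧ closure U₀ ⊆ U)
    (hBump : ∀ U₀ U : Set X, IsOpen U₀ → IsOpen U → closure U₀ ⊆ U →
      ∃ ψ : X → ℝ, Smooth ψ ∧ (∀ x, ψ x ∈ Set.Icc (0:ℝ) 1) ∧
        (∀ x ∈ U₀, ψ x = 1) ∧ ∀ x ∉ U, ψ x = 0)
    (f : ℕ → X → ℝ) (hf : ∀ j, Smooth (f j))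
    (M : ℝ) (hM : ∀ j x, f j x ≤ M)
    (hconv : ∀ φ, Smooth φ →
      ∃ l : ℝ, Tendsto (fun j => ∫ x, f j x * φ x ∂vol) atTop (nhds l))
    (U : Set X) (hUopen : IsOpen U) (hUne : U.Nonempty) :
    ¬ Tendsto (fun j => ∫ x in U, Real.exp (f j x) ∂vol) atTop (nhds 0) := by
  intro htend
  have : Nonempty X := ⟨hUne.some⟩
  obtain ⟨U₀, hU₀open, hU₀ne, hcl⟩ := hShrink U hUopen hUne
  obtain ⟨ψ, hψs, hψ01, hψ1, hψ0⟩ := hBump U₀ U hU₀open hUopen hcl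
  obtain ⟨l, hl⟩ := hconv ψ hψs
  set a : ℕ → ℝ := fun j => ∫ x in U, Real.exp (f j x) ∂vol with ha
  have hU₀sub : U₀ ⊆ U := subset_closure.trans hcl
  have hU₀meas : MeasurableSet U₀ := hU₀open.measurableSet
  -- basic integrability
  have hfc : ∀ j, Continuous (f j) := fun j => hSmoothCont _ (hf j)
  have hint : ∀ (g : X → ℝ), Continuous g → Integrable g vol := by
    intro g hg
    exact integrableOn_univ.mp
      (hg.continuousOn.integrableOn_compact' isCompact_univ MeasurableSet.univ)
  have hψc : Continuous ψ := hSmoothCont _ hψs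
  have hU₀pos : 0 < (vol U₀).toReal :=
    ENNReal.toReal_pos (hU₀open.measure_ne_zero vol hU₀ne) (measure_ne_top vol U₀)
  -- positivity of a j
  have hapos : ∀ j, 0 < a j := by
    intro j
    obtain ⟨x₀, -, hx₀⟩ := isCompact_univ.exists_isMinOn Set.univ_nonempty
      ((Real.continuous_exp.comp (hfc j)).continuousOn)
    have hm : (0:ℝ) < Real.exp (f j x₀) := Real.exp_pos _
    have hge : Real.exp (f j x₀) * (vol U).toReal ≤ a j := by
      apply setIntegral_ge_of_const_le_real hUopen.measurableSet (measure_ne_top vol U)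
      · intro x _; exact hx₀ (Set.mem_univ x)
      · exact (hint _ (Real.continuous_exp.comp (hfc j))).integrableOn
    have hUpos : 0 < (vol U).toReal :=
      ENNReal.toReal_pos (hUopen.measure_ne_zero vol hUne) (measure_ne_top vol U)
    exact lt_of_lt_of_le (mul_pos hm hUpos) hge
  set M' : ℝ := max M 0 with hM'
  -- key upper bound
  have key : ∀ j, ∫ x, f j x * ψ x ∂vol ≤
      (vol U₀).toReal * Real.log (a j) + 1 + M' * (vol Set.univ).toReal := by
    intro j
    have hintexp : Integrable (fun x => Real.exp (f j x)) vol :=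
      hint _ (Real.continuous_exp.comp (hfc j))
    -- step 1 : ∫ f ψ ≤ ∫_{U₀} f + M' * vol X
    have step1 : ∫ x, f j x * ψ x ∂vol ≤ (∫ x in U₀, f j x ∂vol) + M' * (vol Set.univ).toReal := by
      have hpt : ∀ x, f j x * ψ x ≤ U₀.indicator (f j) x + M' := by
        intro x
        have hM'0 : (0:ℝ) ≤ M' := le_max_right _ _
        by_cases hx : x ∈ U₀
        · rw [Set.indicator_of_mem hx, hψ1 x hx, mul_one]
          linarith
        · rw [Set.indicator_of_notMem hx, zero_add]
          rcases le_or_gt 0 (f j x) with h0 | h0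
          · calc f j x * ψ x ≤ f j x * 1 :=
                mul_le_mul_of_nonneg_left (hψ01 x).2 h0
              _ = f j x := mul_one _
              _ ≤ M := hM j x
              _ ≤ M' := le_max_left _ _
          · exact le_trans (mul_nonpos_of_nonpos_of_nonneg h0.le (hψ01 x).1) hM'0
      have hintL : Integrable (fun x => f j x * ψ x) vol := hint _ ((hfc j).mul hψc)
      have hintR : Integrable (fun x => U₀.indicator (f j) x + M') vol :=
        ((hint _ (hfc j)).indicator hU₀meas).add (integrable_const _)
      calc ∫ x, f j x * ψ x ∂vol ≤ ∫ x, (U₀.indicator (f j) x + M') ∂vol :=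
            integral_mono hintL hintR hpt
        _ = (∫ x, U₀.indicator (f j) x ∂vol) + ∫ _x, M' ∂vol :=
            integral_add ((hint _ (hfc j)).indicator hU₀meas) (integrable_const _)
        _ = (∫ x in U₀, f j x ∂vol) + M' * (vol Set.univ).toReal := by
            rw [integral_indicator hU₀meas, integral_const, smul_eq_mul, mul_comm, measureReal_def]
    -- step 2 : ∫_{U₀} f ≤ vol(U₀) log (a j) + 1
    have step2 : (∫ x in U₀, f j x ∂vol) ≤ (vol U₀).toReal * Real.log (a j) + 1 := by
      set c := Real.log (a j) with hc
      have hpt : ∀ x ∈ U₀, f j x ≤ c + Real.exp (f j x) / a j := by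
        intro x _
        have h1 : f j x - c ≤ Real.exp (f j x - c) := by
          have := Real.add_one_le_exp (f j x - c)
          linarith
        have h2 : Real.exp (f j x - c) = Real.exp (f j x) / a j := by
          rw [Real.exp_sub, hc, Real.exp_log (hapos j)]
        linarith [h1, h2 ▸ h1]
      have hintc : IntegrableOn (fun x => c + Real.exp (f j x) / a j) U₀ vol :=
        (hint _ (continuous_const.add ((Real.continuous_exp.comp (hfc j)).div_const _))).integrableOn
      have hmono : (∫ x in U₀, f j x ∂vol) ≤ ∫ x in U₀, (c + Real.exp (f j x) / a j) ∂vol :=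
        setIntegral_mono_on (hint _ (hfc j)).integrableOn hintc hU₀meas hpt
      have hsplit : ∫ x in U₀, (c + Real.exp (f j x) / a j) ∂vol
          = (vol U₀).toReal * c + (∫ x in U₀, Real.exp (f j x) ∂vol) / a j := by
        rw [integral_add (integrableOn_const (C := c) (measure_ne_top vol U₀))
          ((hintexp.integrableOn).div_const _), setIntegral_const, smul_eq_mul,
          integral_div, measureReal_def]
      have hsubset : (∫ x in U₀, Real.exp (f j x) ∂vol) ≤ a j := by
        apply setIntegral_mono_set hintexp.integrableOn
        · exact Filter.Eventually.of_forall fun x => (Real.exp_pos _).le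
        · exact Filter.Eventually.of_forall hU₀sub
      have hquot : (∫ x in U₀, Real.exp (f j x) ∂vol) / a j ≤ 1 :=
        (div_le_one (hapos j)).mpr hsubset
      calc (∫ x in U₀, f j x ∂vol) ≤ (vol U₀).toReal * c
            + (∫ x in U₀, Real.exp (f j x) ∂vol) / a j := by rw [← hsplit]; exact hmono
        _ ≤ (vol U₀).toReal * c + 1 := by linarith
    linarith
  -- the bound tends to -∞
  have hlogbot : Tendsto (fun j => Real.log (a j)) atTop atBot := by
    apply Real.tendsto_log_nhdsGT_zero.comp
    exact tendsto_nhdsWithin_of_tendsto_nhds_of_eventually_within _ htend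
      (Filter.Eventually.of_forall fun j => Set.mem_Ioi.mpr (hapos j))
  have hbot : Tendsto (fun j => (vol U₀).toReal * Real.log (a j) + 1
      + M' * (vol Set.univ).toReal) atTop atBot := by
    apply Filter.Tendsto.atBot_add _ tendsto_const_nhds
    apply Filter.Tendsto.atBot_add _ tendsto_const_nhds
    exact Filter.Tendsto.const_mul_atBot hU₀pos hlogbot
  -- contradiction
  have hev1 : ∀ᶠ j in atTop, (vol U₀).toReal * Real.log (a j) + 1
      + M' * (vol Set.univ).toReal < l - 1 := hbot.eventually_lt_atBot _
  have hev2 : ∀ᶠ j in atTop, l - 1 < ∫ x, f j x * ψ x ∂vol :=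
    hl.eventually (eventually_gt_nhds (by linarith))
  obtain ⟨j, h1, h2⟩ := (hev1.and hev2).exists
  linarith [key j]
end
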